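/- arXiv:2108.07715 — 2 statements merged into one kernel-verified Lean document; each statement's English description precedes it below -/
import Mathlib

section
/- Let ρ be a compactly supported Borel probability measure on ℝ and let ε > 0. Then there exists a constant c > 0, depending only on ρ and ε, such that for every compactly supported Borel probability measure ρ̃ on ℝ with diam(supp ρ̃) ≤ diam(supp ρ) − ε, there is a function f : ℝ → ℝ with Lipschitz constant at most 1 satisfying |∫_ℝ f dρ − ∫_ℝ f dρ̃| ≥ c. (Equivalently, the Wasserstein-1 distance, defined as W₁(ρ,ρ̃) = sup over 1-Lipschitz f of |∫ f dρ − ∫ f dρ̃|, satisfies W₁(ρ,ρ̃) ≥ c.) -/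
open MeasureTheory Set

/-- The topological support of a Borel measure on `ℝ`: the set of points all of whose
neighborhoods have positive measure. -/
def msupport (ρ : Measure ℝ) : Set ℝ := {x : ℝ | ∀ U ∈ nhds x, ρ U ≠ 0}

lemma msupport_compl_null (ρ : Measure ℝ) : ρ (msupport ρ)ᶜ = 0 := by
  apply measure_null_of_locally_null
  intro x hx
  simp only [msupport, mem_compl_iff, mem_setOf_eq, not_forall] at hx
  obtain ⟨U, hU, hU0⟩ := hx
  push_neg at hU0
  exact ⟨U, mem_nhdsWithin_of_mem_nhds hU, hU0⟩

lemma msupport_nonempty (ρ : Measure ℝ) [IsProbabilityMeasure ρ] :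
    (msupport ρ).Nonempty := by
  by_contra h
  rw [not_nonempty_iff_eq_empty] at h
  have := msupport_compl_null ρ
  rw [h, compl_empty, measure_univ] at this
  simp at this

/-- **Wasserstein separation of diameters.** Let `ρ` be a compactly supported
probability measure on `ℝ` and `ε > 0`. There is `c > 0`, depending only on `ρ` and `ε`,
such that every compactly supported probability measure `ρ̃` with
`diam(supp ρ̃) ≤ diam(supp ρ) − ε` admits a `1`-Lipschitz `f` with
`|∫ f dρ − ∫ f dρ̃| ≥ c`; in particular `W₁(ρ, ρ̃) ≥ c`. -/
theorem wasserstein_lower_bound_of_diam_defect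
    (ρ : Measure ℝ) [IsProbabilityMeasure ρ] (hρ : IsCompact (msupport ρ))
    (ε : ℝ) (hε : 0 < ε) :
    ∃ c : ℝ, 0 < c ∧
      ∀ ρ' : Measure ℝ, IsProbabilityMeasure ρ' → IsCompact (msupport ρ') →
        Metric.diam (msupport ρ') ≤ Metric.diam (msupport ρ) - ε →
        ∃ f : ℝ → ℝ, LipschitzWith 1 f ∧
          c ≤ |(∫ y, f y ∂ρ) - ∫ y, f y ∂ρ'| := by
  classical
  set S := msupport ρ with hS
  have hSne : S.Nonempty := msupport_nonempty ρ
  -- a maximal-distance pair in S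
  obtain ⟨p, hp, hmax⟩ := (hρ.prod hρ).exists_isMaxOn (hSne.prod hSne)
    (continuous_dist.continuousOn (s := S ×ˢ S))
  set a := p.1
  set b := p.2
  have ha : a ∈ S := hp.1
  have hb : b ∈ S := hp.2
  have hdiam_le : Metric.diam S ≤ dist a b := by
    apply Metric.diam_le_of_forall_dist_le dist_nonneg
    intro x hx y hy
    exact hmax (Set.mk_mem_prod hx hy)
  -- masses of small balls at a and b
  have hball : ∀ z ∈ S, 0 < (ρ (Metric.ball z (ε / 8))).toReal := by
    intro z hz
    have h0 : ρ (Metric.ball z (ε / 8)) ≠ 0 :=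
      hz (Metric.ball z (ε / 8)) (Metric.ball_mem_nhds z (by positivity))
    exact ENNReal.toReal_pos h0 (measure_ne_top ρ _)
  set α := min (ρ (Metric.ball a (ε / 8))).toReal (ρ (Metric.ball b (ε / 8))).toReal with hα
  have hαpos : 0 < α := lt_min (hball a ha) (hball b hb)
  refine ⟨ε / 8 * α, by positivity, ?_⟩
  intro ρ' hprob' hcpt' hdiam'
  haveI := hprob'
  set S' := msupport ρ' with hS'
  have hS'ne : S'.Nonempty := msupport_nonempty ρ'
  have hS'bdd : Bornology.IsBounded S' := hcpt'.isBounded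
  -- one of a, b is at distance ≥ ε/4 from S'
  have hfar : ∃ z, z ∈ S ∧ α ≤ (ρ (Metric.ball z (ε / 8))).toReal ∧
      ε / 4 ≤ Metric.infDist z S' := by
    by_cases h : ε / 4 ≤ Metric.infDist a S'
    · exact ⟨a, ha, min_le_left _ _, h⟩
    · refine ⟨b, hb, min_le_right _ _, ?_⟩
      by_contra h'
      push_neg at h h'
      obtain ⟨s, hs, hds⟩ := (Metric.infDist_lt_iff hS'ne).mp h
      obtain ⟨t, ht, hdt⟩ := (Metric.infDist_lt_iff hS'ne).mp h'
      have hst : dist s t ≤ Metric.diam S' := Metric.dist_le_diam_of_mem hS'bdd hs ht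
      have htri : dist a b ≤ dist a s + dist s t + dist t b := by
        calc dist a b ≤ dist a t + dist t b := dist_triangle _ _ _
          _ ≤ (dist a s + dist s t) + dist t b := by
              gcongr; exact dist_triangle _ _ _
      have hbt : dist t b = dist b t := dist_comm _ _
      linarith [hdiam']
  obtain ⟨z, hz, hαz, hzfar⟩ := hfar
  -- test function
  set f : ℝ → ℝ := fun x => min (Metric.infDist x S') (ε / 8) with hf
  have hLip : LipschitzWith 1 f := (Metric.lipschitz_infDist_pt S').min_const _
  have hf0 : ∀ x, 0 ≤ f x := fun x =>
    le_min Metric.infDist_nonneg (by positivity)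
  have hfle : ∀ x, f x ≤ ε / 8 := fun x => min_le_right _ _
  refine ⟨f, hLip, ?_⟩
  -- ∫ f dρ' = 0
  have hzero' : (∫ y, f y ∂ρ') = 0 := by
    have hae : f =ᵐ[ρ'] 0 := by
      have hsub : {x | f x ≠ 0} ⊆ S'ᶜ := by
        intro x hx
        simp only [mem_setOf_eq] at hx
        intro hxS'
        apply hx
        simp [hf, Metric.infDist_zero_of_mem hxS', min_eq_left (by positivity : (0:ℝ) ≤ ε/8)]
      exact measure_mono_null hsub (msupport_compl_null ρ')
    exact integral_eq_zero_of_ae hae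
  -- lower bound for ∫ f dρ
  have hfint : Integrable f ρ := by
    refine Integrable.mono' (integrable_const (ε / 8)) hLip.continuous.aestronglyMeasurable ?_
    filter_upwards with x
    rw [Real.norm_eq_abs, abs_of_nonneg (hf0 x)]
    exact hfle x
  set g : ℝ → ℝ := (Metric.ball z (ε / 8)).indicator (fun _ => ε / 8) with hg
  have hgle : ∀ x, g x ≤ f x := by
    intro x
    rw [hg]
    by_cases hx : x ∈ Metric.ball z (ε / 8)
    · rw [indicator_of_mem hx]
      have hxz : dist z x < ε / 8 := by
        rw [dist_comm]; exact Metric.mem_ball.mp hx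
      have : Metric.infDist z S' ≤ Metric.infDist x S' + dist z x :=
        Metric.infDist_le_infDist_add_dist
      have h1 : ε / 8 ≤ Metric.infDist x S' := by linarith
      exact le_min h1 le_rfl
    · rw [indicator_of_notMem hx]; exact hf0 x
  have hgint : Integrable g ρ := (integrable_const (ε / 8)).indicator measurableSet_ball
  have hgineq : ε / 8 * α ≤ ∫ y, g y ∂ρ := by
    rw [hg, integral_indicator_const _ measurableSet_ball, smul_eq_mul]
    calc ε / 8 * α ≤ ε / 8 * (ρ (Metric.ball z (ε / 8))).toReal := by
          apply mul_le_mul_of_nonneg_left hαz (by positivity)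
      _ = (ρ (Metric.ball z (ε / 8))).toReal * (ε / 8) := mul_comm _ _
  have hmono : (∫ y, g y ∂ρ) ≤ ∫ y, f y ∂ρ := integral_mono hgint hfint hgle
  have hnn : 0 ≤ ∫ y, f y ∂ρ := integral_nonneg hf0
  rw [hzero', sub_zero, abs_of_nonneg hnn]
  linarith
end

section
/- (Flocking) Suppose (x_i, v_i)_{i=1}^N follows the sticky particle Cucker–Smale dynamics associated to masses (m_i)_{i=1}^N and protocol φ. Define D_N(t) = x_N(t) − x_1(t), V_N(t) = max_{1≤i≤N} v_i(t) − min_{1≤i≤N} v_i(t), and Φ(x) = ∫_0^x φ(y)dy. Assume sup_{R>0} Φ(R) > E⁰ := Φ(D_N(0)) + V_N(0). Then, with D̄ := inf{R ≥ 0 : Φ(R) ≥ E⁰} (which is finite), one has D_N(t) ≤ D̄ for all t ≥ 0. -/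
open MeasureTheory Set Filter
open scoped Classical

/-- `Φ(x) = ∫_0^x φ(y) dy`, the odd antiderivative of the communication protocol. -/
noncomputable def Phi (φ : ℝ → ℝ) (x : ℝ) : ℝ := ∫ y in (0:ℝ)..x, φ y

/-- The sticky particle Cucker–Smale dynamics with `N` particles, masses `m`,
communication protocol `φ`, collision-time set `C`, positions `x` and velocities `v`. -/
structure StickyCS (N : ℕ) (m : Fin N → ℝ) (φ : ℝ → ℝ) (C : Set ℝ)
    (x v : Fin N → ℝ → ℝ) : Prop where
  m_pos : ∀ i, 0 < m i
  m_sum : ∑ i, m i = 1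
  φ_nonneg : ∀ z, 0 ≤ φ z
  φ_even : ∀ z, φ (-z) = φ z
  φ_locint : ∀ a b : ℝ, IntervalIntegrable φ volume a b
  φ_anti : AntitoneOn φ (Ioi 0)
  φ_cont : ContinuousOn φ {(0:ℝ)}ᶜ
  C_fin : C.Finite
  C_pos : C ⊆ Ioi 0
  x_cont : ∀ i, ContinuousOn (x i) (Ici 0)
  x_ord : ∀ i j : Fin N, i ≤ j → ∀ t ∈ Ici (0:ℝ), x i t ≤ x j t
  v_rc : ∀ i, ∀ t ∈ Ici (0:ℝ), ContinuousWithinAt (v i) (Ici t) t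
  x_deriv : ∀ i, ∀ t ∈ Ici (0:ℝ) \ C, HasDerivWithinAt (x i) (v i t) (Ici 0) t
  v_deriv : ∀ i, ∀ t ∈ Ici (0:ℝ) \ C, HasDerivWithinAt (v i)
      (∑ j ∈ Finset.univ.filter (fun j => x j t ≠ x i t),
        m j * φ (x j t - x i t) * (v j t - v i t)) (Ici 0) t
  sticky : ∀ i j : Fin N, ∀ s t : ℝ, 0 ≤ s → s ≤ t → x i s = x j s → x i t = x j t
  collide : ∀ τ ∈ C, ∀ i : Fin N,
      v i τ = (∑ j ∈ Finset.univ.filter (fun j => x j τ = x i τ),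
                m j * Function.leftLim (v j) τ)
              / (∑ j ∈ Finset.univ.filter (fun j => x j τ = x i τ), m j)

open Topology

lemma sup'_cwa {ι : Type*} {s : Finset ι} (hs : s.Nonempty) {f : ι → ℝ → ℝ} {t : Set ℝ} {a : ℝ}
    (hf : ∀ i ∈ s, ContinuousWithinAt (f i) t a) :
    ContinuousWithinAt (fun y => s.sup' hs (fun i => f i y)) t a := by
  induction hs using Finset.Nonempty.cons_induction with
  | singleton i => simpa using hf i (by simp)
  | cons i s his hs ih =>
      simp only [Finset.sup'_cons hs]
      exact (hf i (by simp)).max (ih (fun j hj => hf j (by simp [hj])))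

lemma inf'_cwa {ι : Type*} {s : Finset ι} (hs : s.Nonempty) {f : ι → ℝ → ℝ} {t : Set ℝ} {a : ℝ}
    (hf : ∀ i ∈ s, ContinuousWithinAt (f i) t a) :
    ContinuousWithinAt (fun y => s.inf' hs (fun i => f i y)) t a := by
  induction hs using Finset.Nonempty.cons_induction with
  | singleton i => simpa using hf i (by simp)
  | cons i s his hs ih =>
      simp only [Finset.inf'_cons hs]
      exact (hf i (by simp)).min (ih (fun j hj => hf j (by simp [hj])))

/-- Gronwall-type maximum lemma. -/
lemma maxGronwall {ι : Type*} [Fintype ι] [Nonempty ι] (h h' : ι → ℝ → ℝ) {a b : ℝ}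
    (hcont : ∀ i, ContinuousOn (h i) (Icc a b))
    (hderiv : ∀ i, ∀ t ∈ Ico a b, HasDerivWithinAt (h i) (h' i t) (Ici t) t)
    (hbound : ∀ t ∈ Ico a b, ∀ i, (∀ k, h k t ≤ h i t) → h' i t ≤ 0) :
    ∀ t ∈ Icc a b, (Finset.univ.sup' Finset.univ_nonempty (fun i => h i t))
      ≤ Finset.univ.sup' Finset.univ_nonempty (fun i => h i a) := by
  set f : ℝ → ℝ := fun t => Finset.univ.sup' Finset.univ_nonempty (fun i => h i t) with hf_def
  have hfc : ContinuousOn f (Icc a b) := fun z hz =>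
    sup'_cwa _ (fun i _ => hcont i z hz)
  intro t ht
  refine image_le_of_liminf_slope_right_le_deriv_boundary (B := fun _ => f a)
    (B' := fun _ => (0:ℝ)) hfc le_rfl continuousOn_const
    (fun z _ => hasDerivWithinAt_const z _ _) ?_ ht
  intro z hz r hr
  by_contra hcon
  rw [Filter.not_frequently] at hcon
  -- eventually slope f z w ≥ r, i.e. some i has h i w ≥ f z + r (w - z)
  have hev : ∀ᶠ w in 𝓝[>] z, ∃ i, f z + r * (w - z) ≤ h i w := by
    filter_upwards [hcon, self_mem_nhdsWithin] with w hw (hw2 : w ∈ Ioi z)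
    have hwz : 0 < w - z := sub_pos.2 hw2
    have hslope : r ≤ slope f z w := not_lt.1 hw
    rw [slope_def_field, le_div_iff₀ hwz] at hslope
    obtain ⟨i, -, hi⟩ := Finset.exists_mem_eq_sup' (Finset.univ_nonempty) (fun i => h i w)
    exact ⟨i, by rw [← hi]; linarith⟩
  -- some fixed i works frequently
  have hex : ∃ i, ∃ᶠ w in 𝓝[>] z, f z + r * (w - z) ≤ h i w := by
    by_contra hno
    push_neg at hno
    have : ∀ᶠ w in 𝓝[>] z, False := by
      have hall : ∀ᶠ w in 𝓝[>] z, ∀ i, ¬ (f z + r * (w - z) ≤ h i w) :=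
        eventually_all.2 (fun i => (hno i).mono fun w hw => by simpa using hw)
      filter_upwards [hev, hall] with w ⟨i, hi⟩ hall
      exact hall i hi
    exact (this.exists).elim (fun _ => id)
  obtain ⟨i, hfreq⟩ := hex
  have hz' : z ∈ Ico a b := hz
  -- h i is right-continuous at z
  have hct : Tendsto (fun w => h i w - r * (w - z)) (𝓝[>] z) (𝓝 (h i z)) := by
    have h1 : Tendsto (h i) (𝓝[>] z) (𝓝 (h i z)) :=
      ((hderiv i z hz').continuousWithinAt.mono Ioi_subset_Ici_self)
    have h2 : Tendsto (fun w => r * (w - z)) (𝓝[>] z) (𝓝 0) := by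
      have : Tendsto (fun w : ℝ => r * (w - z)) (𝓝 z) (𝓝 (r * (z - z))) := by
        exact (tendsto_id.sub_const z).const_mul r
      simpa using this.mono_left nhdsWithin_le_nhds
    simpa using h1.sub h2
  -- hence h i z ≥ f z, so i is an argmax at z
  have hmax : f z ≤ h i z := by
    by_contra hlt
    push_neg at hlt
    have : ∀ᶠ w in 𝓝[>] z, h i w - r * (w - z) < f z := hct (Iio_mem_nhds hlt)
    obtain ⟨w, hw1, hw2⟩ := hfreq.and_eventually this |>.exists
    linarith
  have hargmax : ∀ k, h k z ≤ h i z := fun k =>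
    le_trans (Finset.le_sup' (fun i => h i z) (Finset.mem_univ k)) hmax
  -- slope of h i frequently ≥ r, so h' i z ≥ r
  have hslope : Tendsto (slope (h i) z) (𝓝[>] z) (𝓝 (h' i z)) := by
    have := hasDerivWithinAt_iff_tendsto_slope.1 (hderiv i z hz')
    apply this.mono_left
    apply nhdsWithin_mono
    intro w hw
    exact ⟨mem_Ici.2 (le_of_lt hw), ne_of_gt hw⟩
  have hfreq2 : ∃ᶠ w in 𝓝[>] z, r ≤ slope (h i) z w := by
    refine hfreq.mp ?_
    filter_upwards [self_mem_nhdsWithin] with w (hw2 : w ∈ Ioi z) hw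
    have hwz : 0 < w - z := sub_pos.2 hw2
    rw [slope_def_field, le_div_iff₀ hwz]
    have : h i z ≤ f z := Finset.le_sup' (fun i => h i z) (Finset.mem_univ i)
    linarith
  have hge : r ≤ h' i z := by
    by_contra hlt
    push_neg at hlt
    have : ∀ᶠ w in 𝓝[>] z, slope (h i) z w < r := hslope (Iio_mem_nhds hlt)
    obtain ⟨w, hw1, hw2⟩ := hfreq2.and_eventually this |>.exists
    linarith
  exact absurd (lt_of_le_of_lt hge (lt_of_le_of_lt (hbound z hz' i hargmax) hr)) (lt_irrefl r)

lemma Phi_zero (φ : ℝ → ℝ) : Phi φ 0 = 0 := intervalIntegral.integral_same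

lemma Phi_sub {φ : ℝ → ℝ} (hli : ∀ a b : ℝ, IntervalIntegrable φ volume a b) (a b : ℝ) :
    Phi φ b - Phi φ a = ∫ y in a..b, φ y := by
  rw [Phi, Phi, ← intervalIntegral.integral_add_adjacent_intervals (hli 0 a) (hli a b)]
  ring

lemma Phi_mono {φ : ℝ → ℝ} (hnn : ∀ z, 0 ≤ φ z)
    (hli : ∀ a b : ℝ, IntervalIntegrable φ volume a b) : Monotone (Phi φ) := by
  intro a b hab
  have h0 : (0:ℝ) ≤ ∫ y in a..b, φ y :=
    intervalIntegral.integral_nonneg hab (fun u _ => hnn u)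
  have := Phi_sub hli a b
  linarith

lemma Phi_continuous {φ : ℝ → ℝ} (hli : ∀ a b : ℝ, IntervalIntegrable φ volume a b) :
    Continuous (Phi φ) :=
  intervalIntegral.continuous_primitive hli 0

lemma Phi_nonneg {φ : ℝ → ℝ} (hnn : ∀ z, 0 ≤ φ z)
    (hli : ∀ a b : ℝ, IntervalIntegrable φ volume a b) {a : ℝ} (ha : 0 ≤ a) : 0 ≤ Phi φ a := by
  have := Phi_mono hnn hli ha
  rwa [Phi_zero] at this

lemma final_step {φ : ℝ → ℝ}
    (hnn : ∀ z, 0 ≤ φ z) (hli : ∀ a b : ℝ, IntervalIntegrable φ volume a b)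
    (hanti : AntitoneOn φ (Ioi 0))
    (E0 : ℝ)
    (hthreshold : ∃ R : ℝ, 0 < R ∧ E0 < Phi φ R)
    (Dbar : ℝ) (hDbar : Dbar = sInf {R : ℝ | 0 ≤ R ∧ E0 ≤ Phi φ R})
    (d : ℝ) (hkey : Phi φ d ≤ E0) :
    d ≤ Dbar := by
  obtain ⟨R₀, hR₀pos, hR₀⟩ := hthreshold
  set S : Set ℝ := {R : ℝ | 0 ≤ R ∧ E0 ≤ Phi φ R} with hS
  have hSne : S.Nonempty := ⟨R₀, le_of_lt hR₀pos, le_of_lt hR₀⟩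
  have hSbd : BddBelow S := ⟨0, fun y hy => hy.1⟩
  have hDbar_nn : 0 ≤ Dbar := hDbar ▸ le_csInf hSne (fun y hy => hy.1)
  have hSclosed : IsClosed S := by
    have hSeq : S = Ici 0 ∩ (Phi φ) ⁻¹' (Ici E0) := by
      ext y; simp [hS, Set.mem_setOf_eq]
    rw [hSeq]
    exact isClosed_Ici.inter ((isClosed_Ici).preimage (Phi_continuous hli))
  have hDbarS : Dbar ∈ S := hDbar ▸ hSclosed.csInf_mem hSne hSbd
  have hPhiDbar : E0 ≤ Phi φ Dbar := hDbarS.2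
  by_contra hcon
  push_neg at hcon
  have h1 : Phi φ d ≤ Phi φ Dbar := le_trans hkey hPhiDbar
  have h2 : Phi φ Dbar ≤ Phi φ d := Phi_mono hnn hli (le_of_lt hcon)
  have hint : (∫ y in Dbar..d, φ y) = 0 := by
    have := Phi_sub hli Dbar d; linarith
  set c : ℝ := (Dbar + d) / 2 with hc
  have hc1 : Dbar < c := by rw [hc]; linarith
  have hc2 : c < d := by rw [hc]; linarith
  set c' : ℝ := (Dbar + c) / 2 with hc'
  have hc'1 : Dbar < c' := by rw [hc']; linarith
  have hc'2 : c' < c := by rw [hc']; linarith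
  have hcpos : 0 < c := lt_of_le_of_lt hDbar_nn hc1
  have hφc : φ c = 0 := by
    by_contra hne
    have hφcpos : 0 < φ c := lt_of_le_of_ne (hnn c) (Ne.symm hne)
    have hlow : φ c * (c - c') ≤ ∫ y in c'..c, φ y := by
      have hmge : ∀ y ∈ Icc c' c, φ c ≤ φ y := fun y hy =>
        hanti (lt_of_le_of_lt hDbar_nn (lt_of_lt_of_le hc'1 hy.1)) hcpos hy.2
      calc φ c * (c - c') = ∫ _ in c'..c, φ c := by
            rw [intervalIntegral.integral_const, smul_eq_mul]; ring
        _ ≤ ∫ y in c'..c, φ y :=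
            intervalIntegral.integral_mono_on (le_of_lt hc'2)
              intervalIntegrable_const (hli c' c) hmge
    have hsplit : (∫ y in Dbar..d, φ y)
        = (∫ y in Dbar..c', φ y) + ((∫ y in c'..c, φ y) + (∫ y in c..d, φ y)) := by
      rw [intervalIntegral.integral_add_adjacent_intervals (hli c' c) (hli c d),
        intervalIntegral.integral_add_adjacent_intervals (hli Dbar c') (hli c' d)]
    have g1 : (0:ℝ) ≤ ∫ y in Dbar..c', φ y :=
      intervalIntegral.integral_nonneg (le_of_lt hc'1) (fun u _ => hnn u)
    have g2 : (0:ℝ) ≤ ∫ y in c..d, φ y :=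
      intervalIntegral.integral_nonneg (le_of_lt hc2) (fun u _ => hnn u)
    nlinarith
  have hR₀le : Phi φ R₀ ≤ E0 := by
    rcases le_or_gt R₀ c with hRc | hRc
    · calc Phi φ R₀ ≤ Phi φ c := Phi_mono hnn hli hRc
        _ ≤ Phi φ d := Phi_mono hnn hli (le_of_lt hc2)
        _ ≤ E0 := hkey
    · have hz : (∫ y in c..R₀, φ y) = 0 := by
        have : EqOn φ (fun _ => (0:ℝ)) (uIcc c R₀) := by
          intro y hy
          rw [uIcc_of_le (le_of_lt hRc)] at hy
          have hcy : c ≤ y := hy.1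
          have : φ y ≤ φ c := by
            rcases eq_or_lt_of_le hcy with heq | hlt
            · rw [← heq]
            · exact hanti hcpos (lt_trans hcpos hlt) (le_of_lt hlt)
          have := hnn y
          simp only [hφc] at *
          linarith
        rw [intervalIntegral.integral_congr this]
        simp
      have : Phi φ R₀ = Phi φ c := by
        have := Phi_sub hli c R₀; linarith
      rw [this]
      calc Phi φ c ≤ Phi φ d := Phi_mono hnn hli (le_of_lt hc2)
        _ ≤ E0 := hkey
  linarith


section Aux
variable {N : ℕ} {m : Fin N → ℝ} {φ : ℝ → ℝ} {C : Set ℝ} {x v : Fin N → ℝ → ℝ}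

/-- Particles at the same position (at a non-collision time) have the same velocity. -/
lemma vel_eq (h : StickyCS N m φ C x v) {k i : Fin N} {t : ℝ} (ht0 : 0 ≤ t) (htC : t ∉ C)
    (hx : x k t = x i t) : v k t = v i t := by
  have hsub : Ici t ⊆ Ici (0:ℝ) := Ici_subset_Ici.2 ht0
  have hdk : HasDerivWithinAt (x k) (v k t) (Ici t) t :=
    (h.x_deriv k t ⟨ht0, htC⟩).mono hsub
  have hdi : HasDerivWithinAt (x i) (v i t) (Ici t) t :=
    (h.x_deriv i t ⟨ht0, htC⟩).mono hsub
  have heq : ∀ s ∈ Ici t, x k s = x i s := fun s hs => h.sticky k i t s ht0 hs hx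
  have hdk' : HasDerivWithinAt (x i) (v k t) (Ici t) t := by
    apply hdk.congr (fun s hs => (heq s hs).symm) (heq t (self_mem_Ici)).symm
  have hu : UniqueDiffWithinAt ℝ (Ici t) t := uniqueDiffOn_Ici t t self_mem_Ici
  rw [← hdk'.derivWithin hu, ← hdi.derivWithin hu]

/-- The communication weight between particles is at least `φ` of the diameter. -/
lemma phi_ge (h : StickyCS N m φ C x v) {d Dt : ℝ} (hd : d ≠ 0) (habs : |d| ≤ Dt) :
    φ Dt ≤ φ d := by
  have h1 : φ d = φ |d| := by
    rcases abs_choice d with h' | h'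
    · rw [h']
    · rw [h', ← h.φ_even d]
  have h2 : 0 < |d| := abs_pos.2 hd
  rw [h1]
  exact h.φ_anti h2 (lt_of_lt_of_le h2 habs) habs

lemma Sv_bound_max (h : StickyCS N m φ C x v) {i0 iN : Fin N}
    (hi0 : ∀ k, i0 ≤ k) (hiN : ∀ k, k ≤ iN) {t : ℝ} (ht0 : 0 ≤ t) (htC : t ∉ C)
    {i : Fin N} (hmax : ∀ k, v k t ≤ v i t) :
    (∑ j ∈ Finset.univ.filter (fun j => x j t ≠ x i t),
        m j * φ (x j t - x i t) * (v j t - v i t))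
      ≤ φ (x iN t - x i0 t) * ((∑ k, m k * v k t) - v i t) := by
  set Dt := x iN t - x i0 t with hDt
  have hxb : ∀ k : Fin N, x i0 t ≤ x k t ∧ x k t ≤ x iN t := fun k =>
    ⟨h.x_ord i0 k (hi0 k) t ht0, h.x_ord k iN (hiN k) t ht0⟩
  have step1 : (∑ j ∈ Finset.univ.filter (fun j => x j t ≠ x i t),
        m j * φ (x j t - x i t) * (v j t - v i t))
      ≤ ∑ j ∈ Finset.univ.filter (fun j => x j t ≠ x i t),
        m j * φ Dt * (v j t - v i t) := by
    apply Finset.sum_le_sum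
    intro j hj
    rw [Finset.mem_filter] at hj
    have hd : x j t - x i t ≠ 0 := sub_ne_zero.2 hj.2
    have habs : |x j t - x i t| ≤ Dt := by
      rw [abs_le]
      constructor
      · have := (hxb j).1; have := (hxb i).2; rw [hDt]; linarith
      · have := (hxb j).2; have := (hxb i).1; rw [hDt]; linarith
    have hφ : φ Dt ≤ φ (x j t - x i t) := phi_ge h hd habs
    have hvle : v j t - v i t ≤ 0 := sub_nonpos.2 (hmax j)
    have hm : m j * φ Dt ≤ m j * φ (x j t - x i t) :=
      mul_le_mul_of_nonneg_left hφ (le_of_lt (h.m_pos j))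
    calc m j * φ (x j t - x i t) * (v j t - v i t)
        ≤ m j * φ Dt * (v j t - v i t) := mul_le_mul_of_nonpos_right hm hvle
      _ = m j * φ Dt * (v j t - v i t) := rfl
  have step2 : (∑ j ∈ Finset.univ.filter (fun j => x j t ≠ x i t),
        m j * φ Dt * (v j t - v i t))
      = ∑ j, m j * φ Dt * (v j t - v i t) := by
    rw [← Finset.sum_filter_add_sum_filter_not Finset.univ (fun j => x j t ≠ x i t)]
    have : (∑ j ∈ Finset.univ.filter (fun j => ¬ x j t ≠ x i t),
        m j * φ Dt * (v j t - v i t)) = 0 := by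
      apply Finset.sum_eq_zero
      intro j hj
      rw [Finset.mem_filter, not_not] at hj
      rw [vel_eq h ht0 htC hj.2]
      ring
    rw [this, add_zero]
  have step3 : (∑ j, m j * φ Dt * (v j t - v i t))
      = φ Dt * ((∑ k, m k * v k t) - v i t) := by
    have expand : ∀ j : Fin N, m j * φ Dt * (v j t - v i t)
        = φ Dt * (m j * v j t) - (φ Dt * v i t) * m j := fun j => by ring
    rw [Finset.sum_congr rfl (fun j _ => expand j), Finset.sum_sub_distrib,
      ← Finset.mul_sum, ← Finset.mul_sum, h.m_sum]
    ring
  linarith [step1, step2, step3]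

lemma Sv_bound_min (h : StickyCS N m φ C x v) {i0 iN : Fin N}
    (hi0 : ∀ k, i0 ≤ k) (hiN : ∀ k, k ≤ iN) {t : ℝ} (ht0 : 0 ≤ t) (htC : t ∉ C)
    {i : Fin N} (hmin : ∀ k, v i t ≤ v k t) :
    φ (x iN t - x i0 t) * ((∑ k, m k * v k t) - v i t)
      ≤ (∑ j ∈ Finset.univ.filter (fun j => x j t ≠ x i t),
        m j * φ (x j t - x i t) * (v j t - v i t)) := by
  set Dt := x iN t - x i0 t with hDt
  have hxb : ∀ k : Fin N, x i0 t ≤ x k t ∧ x k t ≤ x iN t := fun k =>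
    ⟨h.x_ord i0 k (hi0 k) t ht0, h.x_ord k iN (hiN k) t ht0⟩
  have step1 : (∑ j ∈ Finset.univ.filter (fun j => x j t ≠ x i t),
        m j * φ Dt * (v j t - v i t))
      ≤ ∑ j ∈ Finset.univ.filter (fun j => x j t ≠ x i t),
        m j * φ (x j t - x i t) * (v j t - v i t) := by
    apply Finset.sum_le_sum
    intro j hj
    rw [Finset.mem_filter] at hj
    have hd : x j t - x i t ≠ 0 := sub_ne_zero.2 hj.2
    have habs : |x j t - x i t| ≤ Dt := by
      rw [abs_le]
      constructor
      · have := (hxb j).1; have := (hxb i).2; rw [hDt]; linarith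
      · have := (hxb j).2; have := (hxb i).1; rw [hDt]; linarith
    have hφ : φ Dt ≤ φ (x j t - x i t) := phi_ge h hd habs
    have hvge : 0 ≤ v j t - v i t := sub_nonneg.2 (hmin j)
    have hm : m j * φ Dt ≤ m j * φ (x j t - x i t) :=
      mul_le_mul_of_nonneg_left hφ (le_of_lt (h.m_pos j))
    exact mul_le_mul_of_nonneg_right hm hvge
  have step2 : (∑ j ∈ Finset.univ.filter (fun j => x j t ≠ x i t),
        m j * φ Dt * (v j t - v i t))
      = ∑ j, m j * φ Dt * (v j t - v i t) := by
    rw [← Finset.sum_filter_add_sum_filter_not Finset.univ (fun j => x j t ≠ x i t)]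
    have : (∑ j ∈ Finset.univ.filter (fun j => ¬ x j t ≠ x i t),
        m j * φ Dt * (v j t - v i t)) = 0 := by
      apply Finset.sum_eq_zero
      intro j hj
      rw [Finset.mem_filter, not_not] at hj
      rw [vel_eq h ht0 htC hj.2]
      ring
    rw [this, add_zero]
  have step3 : (∑ j, m j * φ Dt * (v j t - v i t))
      = φ Dt * ((∑ k, m k * v k t) - v i t) := by
    have expand : ∀ j : Fin N, m j * φ Dt * (v j t - v i t)
        = φ Dt * (m j * v j t) - (φ Dt * v i t) * m j := fun j => by ring
    rw [Finset.sum_congr rfl (fun j _ => expand j), Finset.sum_sub_distrib,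
      ← Finset.mul_sum, ← Finset.mul_sum, h.m_sum]
    ring
  linarith [step1, step2, step3]

end Aux

section Seg
variable {N : ℕ} {m : Fin N → ℝ} {φ : ℝ → ℝ} {C : Set ℝ} {x v : Fin N → ℝ → ℝ}

lemma sup'_pair {N : ℕ} [Nonempty (Fin N)] (c : ℝ) (w : Fin N → ℝ) :
    (Finset.univ.sup' Finset.univ_nonempty
      (fun p : Fin N × Fin N => c + w p.1 - w p.2))
    = c + Finset.univ.sup' Finset.univ_nonempty w
        - Finset.univ.inf' Finset.univ_nonempty w := by
  apply le_antisymm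
  · apply Finset.sup'_le
    intro p _
    have h1 : w p.1 ≤ Finset.univ.sup' Finset.univ_nonempty w :=
      Finset.le_sup' w (Finset.mem_univ p.1)
    have h2 : Finset.univ.inf' Finset.univ_nonempty w ≤ w p.2 :=
      Finset.inf'_le w (Finset.mem_univ p.2)
    linarith
  · obtain ⟨i, -, hi⟩ := Finset.exists_mem_eq_sup' (Finset.univ_nonempty) w
    obtain ⟨j, -, hj⟩ := Finset.exists_mem_eq_inf' (Finset.univ_nonempty) w
    have := Finset.le_sup' (fun p : Fin N × Fin N => c + w p.1 - w p.2)
      (Finset.mem_univ (i, j))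
    rw [hi, hj]
    exact this

/-- Continuity of velocities on collision-free intervals. -/
lemma v_contOn (h : StickyCS N m φ C x v) {a b : ℝ} (ha : 0 ≤ a)
    (hC : ∀ s ∈ Icc a b, s ∉ C) (i : Fin N) : ContinuousOn (v i) (Icc a b) := by
  intro s hs
  have hs0 : 0 ≤ s := le_trans ha hs.1
  rcases eq_or_lt_of_le hs0 with heq | hlt
  · exact (h.v_rc i s (le_of_eq heq)).mono
      (fun y hy => le_trans (heq ▸ ha) hy.1)
  · have hnb : Ici (0:ℝ) ∈ 𝓝 s := Ici_mem_nhds hlt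
    have := (h.v_deriv i s ⟨hs0, hC s hs⟩).hasDerivAt hnb
    exact this.continuousAt.continuousWithinAt

/-- Right-derivative of `Phi φ (D ·)`. -/
lemma PhiD_deriv (h : StickyCS N m φ C x v) {i0 iN : Fin N} {t : ℝ}
    (ht0 : 0 ≤ t) (htC : t ∉ C) (hDne : x iN t - x i0 t ≠ 0) :
    HasDerivWithinAt (fun s => Phi φ (x iN s - x i0 s))
      (φ (x iN t - x i0 t) * (v iN t - v i0 t)) (Ici t) t := by
  have hsub : Ici t ⊆ Ici (0:ℝ) := Ici_subset_Ici.2 ht0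
  have hinner : HasDerivWithinAt (fun s => x iN s - x i0 s) (v iN t - v i0 t) (Ici t) t :=
    ((h.x_deriv iN t ⟨ht0, htC⟩).mono hsub).sub ((h.x_deriv i0 t ⟨ht0, htC⟩).mono hsub)
  have houter : HasDerivAt (Phi φ) (φ (x iN t - x i0 t)) (x iN t - x i0 t) := by
    apply intervalIntegral.integral_hasDerivAt_right (h.φ_locint 0 _)
    · exact ContinuousOn.stronglyMeasurableAtFilter (isOpen_compl_singleton) h.φ_cont _ hDne
    · exact h.φ_cont.continuousAt ((isOpen_compl_singleton).mem_nhds hDne)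
  exact HasDerivAt.comp_hasDerivWithinAt t houter hinner

/-- Energy decay on collision-free intervals. -/
lemma segment_bound (h : StickyCS N m φ C x v) [Nonempty (Fin N)] {i0 iN : Fin N}
    (hi0 : ∀ k, i0 ≤ k) (hiN : ∀ k, k ≤ iN)
    {a b : ℝ} (ha : 0 ≤ a)
    (hC : ∀ s ∈ Icc a b, s ∉ C)
    (hDpos : ∀ s ∈ Icc a b, x iN s - x i0 s ≠ 0) :
    ∀ t ∈ Icc a b,
      Phi φ (x iN t - x i0 t)
        + Finset.univ.sup' Finset.univ_nonempty (fun i => v i t)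
        - Finset.univ.inf' Finset.univ_nonempty (fun i => v i t)
      ≤ Phi φ (x iN a - x i0 a)
        + Finset.univ.sup' Finset.univ_nonempty (fun i => v i a)
        - Finset.univ.inf' Finset.univ_nonempty (fun i => v i a) := by
  set hh : Fin N × Fin N → ℝ → ℝ :=
    fun p s => Phi φ (x iN s - x i0 s) + v p.1 s - v p.2 s with hhdef
  set hh' : Fin N × Fin N → ℝ → ℝ := fun p s =>
    φ (x iN s - x i0 s) * (v iN s - v i0 s)
    + (∑ j ∈ Finset.univ.filter (fun j => x j s ≠ x p.1 s),
        m j * φ (x j s - x p.1 s) * (v j s - v p.1 s))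
    - (∑ j ∈ Finset.univ.filter (fun j => x j s ≠ x p.2 s),
        m j * φ (x j s - x p.2 s) * (v j s - v p.2 s)) with hh'def
  have key := maxGronwall hh hh' (a := a) (b := b) ?_ ?_ ?_
  · intro t ht
    have h1 := key t ht
    have e1 : ∀ s, (Finset.univ.sup' Finset.univ_nonempty (fun p => hh p s))
        = Phi φ (x iN s - x i0 s)
          + Finset.univ.sup' Finset.univ_nonempty (fun i => v i s)
          - Finset.univ.inf' Finset.univ_nonempty (fun i => v i s) := fun s =>
      sup'_pair (Phi φ (x iN s - x i0 s)) (fun i => v i s)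
    rw [e1, e1] at h1
    exact h1
  · -- continuity
    intro p
    have hPc : ContinuousOn (fun s => Phi φ (x iN s - x i0 s)) (Icc a b) := by
      apply (Phi_continuous h.φ_locint).comp_continuousOn
      have hsub : Icc a b ⊆ Ici (0:ℝ) := fun y hy => le_trans ha hy.1
      exact ((h.x_cont iN).mono hsub).sub ((h.x_cont i0).mono hsub)
    exact (hPc.add ((v_contOn h ha hC p.1))).sub (v_contOn h ha hC p.2)
  · -- derivative
    intro p t ht
    have ht0 : 0 ≤ t := le_trans ha ht.1
    have htC : t ∉ C := hC t ⟨ht.1, le_of_lt ht.2⟩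
    have hsub : Ici t ⊆ Ici (0:ℝ) := Ici_subset_Ici.2 ht0
    exact ((PhiD_deriv h ht0 htC (hDpos t ⟨ht.1, le_of_lt ht.2⟩)).add
      ((h.v_deriv p.1 t ⟨ht0, htC⟩).mono hsub)).sub
      ((h.v_deriv p.2 t ⟨ht0, htC⟩).mono hsub)
  · -- sign of the derivative at argmax pairs
    intro t ht p hp
    have ht0 : 0 ≤ t := le_trans ha ht.1
    have htC : t ∉ C := hC t ⟨ht.1, le_of_lt ht.2⟩
    have hmax : ∀ k, v k t ≤ v p.1 t := by
      intro k
      have := hp (k, p.2)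
      simp only [hhdef] at this
      linarith
    have hmin : ∀ k, v p.2 t ≤ v k t := by
      intro k
      have := hp (p.1, k)
      simp only [hhdef] at this
      linarith
    have hS1 := Sv_bound_max h hi0 hiN ht0 htC hmax
    have hS2 := Sv_bound_min h hi0 hiN ht0 htC hmin
    have hφnn : 0 ≤ φ (x iN t - x i0 t) := h.φ_nonneg _
    have hvN : v iN t ≤ v p.1 t := hmax iN
    have hv0 : v p.2 t ≤ v i0 t := hmin i0
    have hfinal : φ (x iN t - x i0 t) * (v iN t - v i0 t)
        + φ (x iN t - x i0 t) * ((∑ k, m k * v k t) - v p.1 t)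
        - φ (x iN t - x i0 t) * ((∑ k, m k * v k t) - v p.2 t) ≤ 0 := by
      have : φ (x iN t - x i0 t) * (v iN t - v i0 t)
          + φ (x iN t - x i0 t) * ((∑ k, m k * v k t) - v p.1 t)
          - φ (x iN t - x i0 t) * ((∑ k, m k * v k t) - v p.2 t)
          = φ (x iN t - x i0 t) * ((v iN t - v i0 t) - (v p.1 t - v p.2 t)) := by ring
      rw [this]
      apply mul_nonpos_of_nonneg_of_nonpos hφnn
      linarith
    simp only [hh'def]
    linarith

/-- Between collisions each `v j + ∑ m k Φ(x j - x k)` is conserved; hence left limits exist. -/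
lemma left_limits (h : StickyCS N m φ C x v) {τ a'' : ℝ} (h0 : 0 ≤ a'') (ha : a'' < τ)
    (hCf : ∀ s, a'' < s → s < τ → s ∉ C)
    (hpair : ∀ j k : Fin N, (∀ s, a'' < s → s < τ → x j s = x k s) ∨
      (∀ s, a'' < s → s < τ → x j s ≠ x k s)) (j : Fin N) :
    ∃ Lj : ℝ, Tendsto (v j) (𝓝[<] τ) (𝓝 Lj) := by
  set g : ℝ → ℝ := fun s => ∑ k, m k * Phi φ (x j s - x k s) with hgdef
  set w : ℝ → ℝ := fun s => v j s + g s with hwdef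
  have hτpos : 0 < τ := lt_of_le_of_lt h0 ha
  have hw0 : ∀ s ∈ Ioo a'' τ, HasDerivAt w 0 s := by
    intro s hs
    have hs0 : 0 < s := lt_of_le_of_lt h0 hs.1
    have hsC : s ∉ C := hCf s hs.1 hs.2
    have hv : HasDerivAt (v j)
        (∑ k ∈ Finset.univ.filter (fun k => x k s ≠ x j s),
          m k * φ (x k s - x j s) * (v k s - v j s)) s :=
      (h.v_deriv j s ⟨le_of_lt hs0, hsC⟩).hasDerivAt (Ici_mem_nhds hs0)
    have hg : HasDerivAt g
        (∑ k, if x k s = x j s then 0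
          else m k * (φ (x j s - x k s) * (v j s - v k s))) s := by
      apply HasDerivAt.fun_sum
      intro k _
      rcases hpair j k with hjk | hjk
      · have heq : x k s = x j s := (hjk s hs.1 hs.2).symm
        rw [if_pos heq]
        have hev : (fun s' => m k * Phi φ (x j s' - x k s'))
            =ᶠ[𝓝 s] (fun _ => m k * Phi φ 0) := by
          filter_upwards [isOpen_Ioo.mem_nhds hs] with y hy
          rw [hjk y hy.1 hy.2, sub_self]
        exact (hasDerivAt_const s (m k * Phi φ 0)).congr_of_eventuallyEq hev
      · have hne : ¬ (x k s = x j s) := fun hc => (hjk s hs.1 hs.2) hc.symm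
        rw [if_neg hne]
        have hinner : HasDerivAt (fun s' => x j s' - x k s') (v j s - v k s) s :=
          (((h.x_deriv j s ⟨le_of_lt hs0, hsC⟩).hasDerivAt (Ici_mem_nhds hs0)).sub
            ((h.x_deriv k s ⟨le_of_lt hs0, hsC⟩).hasDerivAt (Ici_mem_nhds hs0)))
        have hxne : x j s - x k s ≠ 0 := sub_ne_zero.2 (hjk s hs.1 hs.2)
        have houter : HasDerivAt (Phi φ) (φ (x j s - x k s)) (x j s - x k s) := by
          apply intervalIntegral.integral_hasDerivAt_right (h.φ_locint 0 _)
          · exact ContinuousOn.stronglyMeasurableAtFilter (isOpen_compl_singleton)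
              h.φ_cont _ hxne
          · exact h.φ_cont.continuousAt ((isOpen_compl_singleton).mem_nhds hxne)
        exact (HasDerivAt.comp s houter hinner).const_mul (m k)
    have hsum : (∑ k ∈ Finset.univ.filter (fun k => x k s ≠ x j s),
          m k * φ (x k s - x j s) * (v k s - v j s))
        + (∑ k, if x k s = x j s then 0
            else m k * (φ (x j s - x k s) * (v j s - v k s))) = 0 := by
      rw [Finset.sum_filter]
      rw [← Finset.sum_add_distrib]
      apply Finset.sum_eq_zero
      intro k _
      by_cases hk : x k s = x j s
      · simp [hk]
      · have hne' : x k s ≠ x j s := hk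
        rw [if_neg hk, if_pos hne']
        have heven : φ (x j s - x k s) = φ (x k s - x j s) := by
          rw [← neg_sub (x k s) (x j s), h.φ_even]
        rw [heven]
        ring
    have := hv.add hg
    rwa [hsum] at this
  set s₀ : ℝ := (a'' + τ) / 2 with hs₀def
  have hs₀ : s₀ ∈ Ioo a'' τ := by constructor <;> (rw [hs₀def]; linarith)
  have hwconst : ∀ s ∈ Ioo a'' τ, w s = w s₀ := by
    intro s hs
    rcases le_total s s₀ with hle | hle
    · have hsub : Icc s s₀ ⊆ Ioo a'' τ := fun y hy => ⟨lt_of_lt_of_le hs.1 hy.1,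
        lt_of_le_of_lt hy.2 hs₀.2⟩
      have := constant_of_has_deriv_right_zero
        (f := w) (a := s) (b := s₀)
        (fun y hy => ((hw0 y (hsub hy)).continuousAt).continuousWithinAt)
        (fun y hy => (hw0 y (hsub (Ico_subset_Icc_self hy))).hasDerivWithinAt)
      exact (this s₀ (right_mem_Icc.2 hle)).symm
    · have hsub : Icc s₀ s ⊆ Ioo a'' τ := fun y hy => ⟨lt_of_lt_of_le hs₀.1 hy.1,
        lt_of_le_of_lt hy.2 hs.2⟩
      have := constant_of_has_deriv_right_zero
        (f := w) (a := s₀) (b := s)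
        (fun y hy => ((hw0 y (hsub hy)).continuousAt).continuousWithinAt)
        (fun y hy => (hw0 y (hsub (Ico_subset_Icc_self hy))).hasDerivWithinAt)
      exact this s (right_mem_Icc.2 hle)
  have hgcont : ContinuousAt g τ := by
    have hterm : ∀ k : Fin N, ContinuousAt (fun s => m k * Phi φ (x j s - x k s)) τ := by
      intro k
      have hxj : ContinuousAt (x j) τ := (h.x_cont j).continuousAt (Ici_mem_nhds hτpos)
      have hxk : ContinuousAt (x k) τ := (h.x_cont k).continuousAt (Ici_mem_nhds hτpos)
      exact (continuousAt_const.mul ((Phi_continuous h.φ_locint).continuousAt.comp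
        (hxj.sub hxk)))
    exact tendsto_finset_sum Finset.univ (fun k _ => hterm k)
  refine ⟨w s₀ - g τ, ?_⟩
  have h1 : Tendsto (fun s => w s₀ - g s) (𝓝[<] τ) (𝓝 (w s₀ - g τ)) :=
    tendsto_const_nhds.sub (hgcont.tendsto.mono_left nhdsWithin_le_nhds)
  apply h1.congr'
  filter_upwards [Ioo_mem_nhdsLT ha] with s hs
  have h2 := hwconst s hs
  have h3 : w s = v j s + g s := rfl
  have h4 : w s₀ = v j s₀ + g s₀ := rfl
  rw [h3] at h2
  linarith

/-- At a collision time, velocities have left limits and the post-collision velocities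
lie between the min and max of the left limits. -/
lemma collision_left (h : StickyCS N m φ C x v) [Nonempty (Fin N)] {τ : ℝ} (hτC : τ ∈ C) :
    ∃ L : Fin N → ℝ, (∀ j, Tendsto (v j) (𝓝[<] τ) (𝓝 (L j))) ∧
      (∀ i, Finset.univ.inf' Finset.univ_nonempty L ≤ v i τ
        ∧ v i τ ≤ Finset.univ.sup' Finset.univ_nonempty L) := by
  have hτpos : 0 < τ := h.C_pos hτC
  -- construct a'' < τ beyond the last collision / last pair-merging before τ
  classical
  set sp : Fin N × Fin N → ℝ := fun p =>
    if hp : ∃ s, 0 ≤ s ∧ s < τ ∧ x p.1 s = x p.2 s then hp.choose else 0 with hspdef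
  have hsp_lt : ∀ p, sp p < τ := by
    intro p
    rw [hspdef]
    simp only []
    split
    · next hp => exact hp.choose_spec.2.1
    · exact hτpos
  have hsp_nn : ∀ p, 0 ≤ sp p := by
    intro p
    rw [hspdef]
    simp only []
    split
    · next hp => exact hp.choose_spec.1
    · exact le_rfl
  set Fins : Finset ℝ :=
    insert 0 ((h.C_fin.toFinset.filter (fun s => s < τ)) ∪
      Finset.image sp Finset.univ) with hFins
  have hFne : Fins.Nonempty := ⟨0, by simp [hFins]⟩
  set a'' : ℝ := Fins.max' hFne with ha''def
  have ha''0 : 0 ≤ a'' := Finset.le_max' Fins 0 (by simp [hFins])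
  have ha''τ : a'' < τ := by
    apply (Finset.max'_lt_iff Fins hFne).2
    intro y hy
    rw [hFins] at hy
    simp only [Finset.mem_insert, Finset.mem_union, Finset.mem_filter,
      Finset.mem_image] at hy
    rcases hy with rfl | hy | ⟨p, -, rfl⟩
    · exact hτpos
    · exact hy.2
    · exact hsp_lt p
  have hCf : ∀ s, a'' < s → s < τ → s ∉ C := by
    intro s hs1 hs2 hsC
    have : s ∈ Fins := by
      rw [hFins]
      simp only [Finset.mem_insert, Finset.mem_union, Finset.mem_filter]
      exact Or.inr (Or.inl ⟨h.C_fin.mem_toFinset.2 hsC, hs2⟩)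
    exact absurd (Finset.le_max' Fins s this) (not_le.2 hs1)
  have hpair : ∀ j k : Fin N, (∀ s, a'' < s → s < τ → x j s = x k s) ∨
      (∀ s, a'' < s → s < τ → x j s ≠ x k s) := by
    intro j k
    by_cases hp : ∃ s, 0 ≤ s ∧ s < τ ∧ x j s = x k s
    · left
      intro s hs1 hs2
      have hsp_le : sp (j, k) ≤ a'' := by
        apply Finset.le_max'
        rw [hFins]
        simp only [Finset.mem_insert, Finset.mem_union, Finset.mem_image]
        exact Or.inr (Or.inr ⟨(j, k), Finset.mem_univ _, rfl⟩)
      have hspk : sp (j, k) = hp.choose := by rw [hspdef]; exact dif_pos hp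
      have hcs := hp.choose_spec
      exact h.sticky j k hp.choose s hcs.1
        (le_of_lt (lt_of_le_of_lt (hspk ▸ hsp_le) hs1)) hcs.2.2
    · right
      intro s hs1 hs2 hceq
      exact hp ⟨s, le_trans ha''0 (le_of_lt hs1), hs2, hceq⟩
  have hLL := fun j => left_limits h ha''0 ha''τ hCf hpair j
  choose L hL using hLL
  refine ⟨L, hL, ?_⟩
  have hneBot : (𝓝[<] τ) ≠ ⊥ := (nhdsLT_neBot τ).ne'
  have hleft : ∀ j, Function.leftLim (v j) τ = L j := fun j =>
    leftLim_eq_of_tendsto (hL j)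
  intro i
  have hcol := h.collide τ hτC i
  simp only [hleft] at hcol
  set J := Finset.univ.filter (fun j => x j τ = x i τ) with hJ
  have hiJ : i ∈ J := by rw [hJ]; simp
  have hMpos : 0 < ∑ j ∈ J, m j := Finset.sum_pos (fun j _ => h.m_pos j) ⟨i, hiJ⟩
  constructor
  · rw [hcol, le_div_iff₀ hMpos]
    calc (Finset.univ.inf' Finset.univ_nonempty L) * ∑ j ∈ J, m j
        = ∑ j ∈ J, (Finset.univ.inf' Finset.univ_nonempty L) * m j := by
          rw [Finset.mul_sum]
      _ ≤ ∑ j ∈ J, m j * L j := by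
          apply Finset.sum_le_sum
          intro j _
          rw [mul_comm]
          exact mul_le_mul_of_nonneg_left
            (Finset.inf'_le L (Finset.mem_univ j)) (le_of_lt (h.m_pos j))
  · rw [hcol, div_le_iff₀ hMpos]
    calc (∑ j ∈ J, m j * L j)
        ≤ ∑ j ∈ J, m j * (Finset.univ.sup' Finset.univ_nonempty L) := by
          apply Finset.sum_le_sum
          intro j _
          exact mul_le_mul_of_nonneg_left
            (Finset.le_sup' L (Finset.mem_univ j)) (le_of_lt (h.m_pos j))
      _ = (Finset.univ.sup' Finset.univ_nonempty L) * ∑ j ∈ J, m j := by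
          rw [Finset.mul_sum]
          apply Finset.sum_congr rfl
          intro j _
          ring

end Seg


/-- **Flocking.** Let `D_N(t) = x_N(t) − x_1(t)` and
`V_N(t) = max_i v_i(t) − min_i v_i(t)`. If `sup_{R>0} Φ(R) > E⁰ := Φ(D_N(0)) + V_N(0)`,
then with `D̄ := inf{R ≥ 0 : Φ(R) ≥ E⁰}` one has `D_N(t) ≤ D̄` for all `t ≥ 0`. -/
theorem sticky_CS_flocking {N : ℕ} (hN : 0 < N) (m : Fin N → ℝ) (φ : ℝ → ℝ)
    (C : Set ℝ) (x v : Fin N → ℝ → ℝ) (h : StickyCS N m φ C x v)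
    (D V : ℝ → ℝ)
    (hD : ∀ t, D t = x ⟨N - 1, Nat.sub_lt hN Nat.one_pos⟩ t - x ⟨0, hN⟩ t)
    (hV : ∀ t, V t = Finset.univ.sup' ⟨⟨0, hN⟩, Finset.mem_univ _⟩ (fun i => v i t)
        - Finset.univ.inf' ⟨⟨0, hN⟩, Finset.mem_univ _⟩ (fun i => v i t))
    (E0 : ℝ) (hE0 : E0 = Phi φ (D 0) + V 0)
    (hthreshold : ∃ R : ℝ, 0 < R ∧ E0 < Phi φ R)
    (Dbar : ℝ) (hDbar : Dbar = sInf {R : ℝ | 0 ≤ R ∧ E0 ≤ Phi φ R}) :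
    ∀ t : ℝ, 0 ≤ t → D t ≤ Dbar := by
  haveI : Nonempty (Fin N) := ⟨⟨0, hN⟩⟩
  set i0 : Fin N := ⟨0, hN⟩ with hi0def
  set iN : Fin N := ⟨N - 1, Nat.sub_lt hN Nat.one_pos⟩ with hiNdef
  have hi0 : ∀ k : Fin N, i0 ≤ k := fun k => by
    rw [Fin.le_def]; exact Nat.zero_le _
  have hiN : ∀ k : Fin N, k ≤ iN := fun k => by
    rw [Fin.le_def]; exact Nat.le_sub_one_of_lt k.isLt
  -- the energy
  set E : ℝ → ℝ := fun t => Phi φ (x iN t - x i0 t)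
      + Finset.univ.sup' Finset.univ_nonempty (fun i => v i t)
      - Finset.univ.inf' Finset.univ_nonempty (fun i => v i t) with hEdef
  have hED : ∀ t, E t = Phi φ (D t) + V t := by
    intro t
    rw [hD t, hV t]
    show Phi φ (x iN t - x i0 t)
      + Finset.univ.sup' Finset.univ_nonempty (fun i => v i t)
      - Finset.univ.inf' Finset.univ_nonempty (fun i => v i t) = _
    ring
  have hVnn : ∀ t, 0 ≤ V t := by
    intro t
    rw [hV t]
    have h1 := Finset.le_sup' (fun i => v i t) (Finset.mem_univ i0)
    have h2 := Finset.inf'_le (fun i => v i t) (Finset.mem_univ i0)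
    have : Finset.univ.inf' ⟨i0, Finset.mem_univ i0⟩ (fun i => v i t)
        ≤ Finset.univ.sup' ⟨i0, Finset.mem_univ i0⟩ (fun i => v i t) := le_trans h2 h1
    linarith
  have hE00 : E 0 = E0 := by rw [hED 0, hE0]
  have hDnn : ∀ t, 0 ≤ t → 0 ≤ D t := by
    intro t ht
    rw [hD t]
    have := h.x_ord i0 iN (hi0 iN) t ht
    linarith
  have hE0nn : 0 ≤ E0 := by
    rw [hE0]
    have := Phi_nonneg h.φ_nonneg h.φ_locint (hDnn 0 le_rfl)
    have := hVnn 0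
    linarith
  intro t₀ ht₀
  suffices hkey : Phi φ (D t₀) ≤ E0 by
    exact final_step h.φ_nonneg h.φ_locint h.φ_anti E0 hthreshold Dbar hDbar (D t₀) hkey
  by_cases hzero : ∃ s, 0 ≤ s ∧ s ≤ t₀ ∧ D s = 0
  · obtain ⟨s, hs0, hst, hDs⟩ := hzero
    have hxeq : x iN s = x i0 s := by rw [hD s] at hDs; linarith
    have : x iN t₀ = x i0 t₀ := h.sticky iN i0 s t₀ hs0 hst hxeq
    have hDt₀ : D t₀ = 0 := by rw [hD t₀]; linarith
    rw [hDt₀, Phi_zero]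
    exact hE0nn
  · push_neg at hzero
    -- D never vanishes on [0, t₀]
    have hDne : ∀ s, 0 ≤ s → s ≤ t₀ → x iN s - x i0 s ≠ 0 := by
      intro s hs0 hst hc
      exact hzero s hs0 hst (by rw [hD s]; linarith)
    -- extension lemma on collision-free left-closed intervals
    have hext : ∀ lo t : ℝ, 0 ≤ lo → lo ≤ t → t ≤ t₀ →
        (∀ s, lo < s → s ≤ t → s ∉ C) → lo ∉ C → E t ≤ E lo := by
      intro lo t hlo hlot htt₀ hnc hloC
      have hCf : ∀ s ∈ Icc lo t, s ∉ C := by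
        intro s hs
        rcases eq_or_lt_of_le hs.1 with heq | hlt
        · rwa [← heq]
        · exact hnc s hlt hs.2
      have hDp : ∀ s ∈ Icc lo t, x iN s - x i0 s ≠ 0 := fun s hs =>
        hDne s (le_trans hlo hs.1) (le_trans hs.2 htt₀)
      exact segment_bound h hi0 hiN hlo hCf hDp t ⟨hlot, le_rfl⟩
    have hext' : ∀ lo t : ℝ, 0 ≤ lo → lo < t → t ≤ t₀ →
        (∀ s, lo < s → s ≤ t → s ∉ C) → E t ≤ E lo := by
      intro lo t hlo hlot htt₀ hnc
      -- E is right-continuous at lo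
      have hrc : Tendsto E (𝓝[>] lo) (𝓝 (E lo)) := by
        have hxc : ∀ i : Fin N, ContinuousWithinAt (x i) (Ioi lo) lo := fun i =>
          ((h.x_cont i) lo hlo).mono (fun y hy => le_trans hlo (le_of_lt hy))
        have hPc : ContinuousWithinAt (fun s => Phi φ (x iN s - x i0 s)) (Ioi lo) lo :=
          ((Phi_continuous h.φ_locint).continuousAt).comp_continuousWithinAt
            ((hxc iN).sub (hxc i0))
        have hvc : ∀ i : Fin N, ContinuousWithinAt (v i) (Ioi lo) lo := fun i =>
          (h.v_rc i lo hlo).mono Ioi_subset_Ici_self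
        exact ((hPc.add (sup'_cwa Finset.univ_nonempty (fun i _ => hvc i))).sub
          (inf'_cwa Finset.univ_nonempty (fun i _ => hvc i)))
      have hevent : ∀ᶠ a' in 𝓝[>] lo, E t ≤ E a' := by
        filter_upwards [Ioc_mem_nhdsGT hlot] with a' ha'
        have hCf : ∀ s ∈ Icc a' t, s ∉ C := fun s hs =>
          hnc s (lt_of_lt_of_le ha'.1 hs.1) hs.2
        have hDp : ∀ s ∈ Icc a' t, x iN s - x i0 s ≠ 0 := fun s hs =>
          hDne s (le_trans (le_trans hlo (le_of_lt ha'.1)) hs.1) (le_trans hs.2 htt₀)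
        exact segment_bound h hi0 hiN (le_trans hlo (le_of_lt ha'.1)) hCf hDp t
          ⟨ha'.2, le_rfl⟩
      exact ge_of_tendsto hrc hevent
    -- main induction on the number of collisions up to time t
    have hmain : ∀ n : ℕ, ∀ t, 0 ≤ t → t ≤ t₀ →
        ((h.C_fin.toFinset.filter (fun s => 0 < s ∧ s ≤ t)).card ≤ n) → E t ≤ E0 := by
      intro n
      induction n with
      | zero =>
        intro t ht htt₀ hcard
        have hfe : (h.C_fin.toFinset.filter (fun s => 0 < s ∧ s ≤ t)) = ∅ :=
          Finset.card_eq_zero.1 (le_antisymm hcard (Nat.zero_le _))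
        have hnc : ∀ s, 0 < s → s ≤ t → s ∉ C := by
          intro s h1 h2 hsC
          have : s ∈ h.C_fin.toFinset.filter (fun s => 0 < s ∧ s ≤ t) :=
            Finset.mem_filter.2 ⟨h.C_fin.mem_toFinset.2 hsC, h1, h2⟩
          rw [hfe] at this
          exact absurd this (Finset.notMem_empty s)
        have h0C : (0:ℝ) ∉ C := fun hc => absurd (h.C_pos hc) (by simp)
        calc E t ≤ E 0 := hext 0 t le_rfl ht htt₀ hnc h0C
          _ = E0 := hE00
      | succ n ih =>
        intro t ht htt₀ hcard
        set Fil := h.C_fin.toFinset.filter (fun s => 0 < s ∧ s ≤ t) with hFil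
        by_cases hne : Fil.Nonempty
        · set τ : ℝ := Fil.max' hne with hτdef
          have hτmem : τ ∈ Fil := Fil.max'_mem hne
          have hτC : τ ∈ C := h.C_fin.mem_toFinset.1 (Finset.mem_filter.1 hτmem).1
          have hτpos : 0 < τ := (Finset.mem_filter.1 hτmem).2.1
          have hτt : τ ≤ t := (Finset.mem_filter.1 hτmem).2.2
          -- energy bound at the collision time τ
          have hEτ : E τ ≤ E0 := by
            obtain ⟨L, hL, hbd⟩ := collision_left h hτC
            obtain ⟨p, -, hp⟩ := Finset.exists_mem_eq_sup' (Finset.univ_nonempty) L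
            obtain ⟨q, -, hq⟩ := Finset.exists_mem_eq_inf' (Finset.univ_nonempty) L
            have hPc : ContinuousAt (fun s => Phi φ (x iN s - x i0 s)) τ := by
              have hxc : ∀ i : Fin N, ContinuousAt (x i) τ := fun i =>
                (h.x_cont i).continuousAt (Ici_mem_nhds hτpos)
              exact ((Phi_continuous h.φ_locint).continuousAt).comp
                ((hxc iN).sub (hxc i0))
            have htd : Tendsto (fun s => Phi φ (x iN s - x i0 s) + v p s - v q s)
                (𝓝[<] τ) (𝓝 (Phi φ (x iN τ - x i0 τ) + L p - L q)) :=
              ((hPc.tendsto.mono_left nhdsWithin_le_nhds).add (hL p)).sub (hL q)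
            have hev : ∀ᶠ s in 𝓝[<] τ, Phi φ (x iN s - x i0 s) + v p s - v q s ≤ E0 := by
              filter_upwards [Ioo_mem_nhdsLT hτpos] with s hs
              have hs0 : 0 ≤ s := le_of_lt hs.1
              have hsτ : s < τ := hs.2
              have hcard' : ((h.C_fin.toFinset.filter
                  (fun u => 0 < u ∧ u ≤ s)).card ≤ n) := by
                have hsub : h.C_fin.toFinset.filter (fun u => 0 < u ∧ u ≤ s)
                    ⊆ Fil.erase τ := by
                  intro y hy
                  rw [Finset.mem_filter] at hy
                  rw [Finset.mem_erase]
                  constructor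
                  · exact ne_of_lt (lt_of_le_of_lt hy.2.2 hsτ)
                  · exact Finset.mem_filter.2 ⟨hy.1, hy.2.1,
                      le_trans hy.2.2 (le_trans (le_of_lt hsτ) hτt)⟩
                calc (h.C_fin.toFinset.filter (fun u => 0 < u ∧ u ≤ s)).card
                    ≤ (Fil.erase τ).card := Finset.card_le_card hsub
                  _ = Fil.card - 1 := Finset.card_erase_of_mem hτmem
                  _ ≤ n := by omega
              have hEs : E s ≤ E0 := ih s hs0 (le_trans (le_of_lt hsτ)
                (le_trans hτt htt₀)) hcard'
              have h1 : v p s ≤ Finset.univ.sup' Finset.univ_nonempty (fun i => v i s) :=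
                Finset.le_sup' (fun i => v i s) (Finset.mem_univ p)
              have h2 : Finset.univ.inf' Finset.univ_nonempty (fun i => v i s) ≤ v q s :=
                Finset.inf'_le (fun i => v i s) (Finset.mem_univ q)
              have hEs' : Phi φ (x iN s - x i0 s)
                  + Finset.univ.sup' Finset.univ_nonempty (fun i => v i s)
                  - Finset.univ.inf' Finset.univ_nonempty (fun i => v i s) ≤ E0 := hEs
              linarith
            have hlim : Phi φ (x iN τ - x i0 τ) + L p - L q ≤ E0 :=
              le_of_tendsto htd hev
            have h3 : Finset.univ.sup' Finset.univ_nonempty (fun i => v i τ) ≤ L p := by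
              apply Finset.sup'_le
              intro i _
              exact le_trans (hbd i).2 (le_of_eq hp)
            have h4 : L q ≤ Finset.univ.inf' Finset.univ_nonempty (fun i => v i τ) := by
              apply Finset.le_inf'
              intro i _
              exact le_trans (le_of_eq hq.symm) (hbd i).1
            show Phi φ (x iN τ - x i0 τ)
              + Finset.univ.sup' Finset.univ_nonempty (fun i => v i τ)
              - Finset.univ.inf' Finset.univ_nonempty (fun i => v i τ) ≤ E0
            linarith
          rcases eq_or_lt_of_le hτt with heq | hlt
          · rwa [← heq]
          · have hnc : ∀ s, τ < s → s ≤ t → s ∉ C := by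
              intro s h1 h2 hsC
              have : s ∈ Fil := Finset.mem_filter.2
                ⟨h.C_fin.mem_toFinset.2 hsC, lt_trans hτpos h1, h2⟩
              exact absurd (Fil.le_max' s this) (not_le.2 h1)
            calc E t ≤ E τ := hext' τ t (le_of_lt hτpos) hlt htt₀ hnc
              _ ≤ E0 := hEτ
        · -- no collisions in (0, t]
          have hnc : ∀ s, 0 < s → s ≤ t → s ∉ C := by
            intro s h1 h2 hsC
            exact hne ⟨s, Finset.mem_filter.2 ⟨h.C_fin.mem_toFinset.2 hsC, h1, h2⟩⟩
          have h0C : (0:ℝ) ∉ C := fun hc => absurd (h.C_pos hc) (by simp)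
          calc E t ≤ E 0 := hext 0 t le_rfl ht htt₀ hnc h0C
            _ = E0 := hE00
    have hfin := hmain (h.C_fin.toFinset.filter (fun s => 0 < s ∧ s ≤ t₀)).card
      t₀ ht₀ le_rfl le_rfl
    rw [hED t₀] at hfin
    have := hVnn t₀
    linarith
end
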